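/- The sequence Φ_n := (1 - 1/n)·exp(i·log n) (n ≥ 1) of complex numbers is divergent, but satisfies lim_{n→∞} Φ_{n+1}·conj(Φ_n) = 1. -/

import Mathlib

open Filter Complex

theorem stmt3_aux1 : Tendsto (fun n : ℕ => 1 - 1 / (n : ℂ)) atTop (nhds 1) := by
  have h : Tendsto (fun n : ℕ => (1:ℂ) / n) atTop (nhds 0) := by
    have h0 := (Complex.continuous_ofReal.tendsto 0).comp tendsto_one_div_atTop_nhds_zero_nat
    refine Tendsto.congr (fun n => ?_) (by simpa using h0)
    simp [Function.comp]
  simpa using tendsto_const_nhds.sub h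

theorem stmt3_aux2 : Tendsto (fun n : ℕ => Real.log (n+1) - Real.log n) atTop (nhds 0) := by
  have h1 : Tendsto (fun n : ℕ => ((n:ℝ)+1)/n) atTop (nhds 1) := by
    have h : Tendsto (fun n : ℕ => (1:ℝ) / n) atTop (nhds 0) := tendsto_one_div_atTop_nhds_zero_nat
    have h2 : Tendsto (fun n : ℕ => 1 + (1:ℝ)/n) atTop (nhds 1) := by
      simpa using tendsto_const_nhds.add h
    refine Tendsto.congr' ?_ h2
    filter_upwards [eventually_ge_atTop 1] with n hn
    have hn' : (n:ℝ) ≠ 0 := by positivity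
    field_simp

  have h2 := (Real.continuousAt_log one_ne_zero).tendsto.comp h1
  rw [Real.log_one] at h2
  refine Tendsto.congr' ?_ h2
  filter_upwards [eventually_ge_atTop 1] with n hn
  have hn' : (n:ℝ) ≠ 0 := by positivity
  simp [Function.comp, Real.log_div (by positivity : ((n:ℝ)+1) ≠ 0) hn']

theorem stmt3_aux3 (n : ℕ) :
    ((1 - 1 / ((n + 1 : ℕ) : ℂ)) * Complex.exp (Complex.I * Real.log (n + 1 : ℕ))) *
      (starRingEnd ℂ) ((1 - 1 / (n : ℂ)) * Complex.exp (Complex.I * Real.log n)) =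
    (1 - 1 / ((n:ℂ) + 1)) * (1 - 1 / (n : ℂ)) *
      Complex.exp (Complex.I * ((Real.log (n+1) - Real.log n : ℝ) : ℂ)) := by
  have hc : (starRingEnd ℂ) (Complex.exp (Complex.I * Real.log n))
      = Complex.exp (-(Complex.I * Real.log n)) := by
    rw [← Complex.exp_conj, map_mul, Complex.conj_I, Complex.conj_ofReal, neg_mul]
  rw [map_mul, hc]
  have h2 : (starRingEnd ℂ) (1 - 1 / (n : ℂ)) = 1 - 1 / (n : ℂ) := by
    simp [map_sub, map_div₀]
  rw [h2]
  have he : Complex.exp (Complex.I * ((Real.log (n+1) - Real.log n : ℝ) : ℂ))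
      = Complex.exp (Complex.I * Real.log ((n:ℝ)+1)) * Complex.exp (-(Complex.I * Real.log n)) := by
    rw [← Complex.exp_add]
    congr 1
    push_cast
    ring
  rw [he]
  push_cast
  ring

theorem stmt3_aux4 : Tendsto (fun n : ℕ =>
    ((1 - 1 / ((n + 1 : ℕ) : ℂ)) * Complex.exp (Complex.I * Real.log (n + 1 : ℕ))) *
      (starRingEnd ℂ) ((1 - 1 / (n : ℂ)) * Complex.exp (Complex.I * Real.log n)))
    atTop (nhds 1) := by
  have ha : Tendsto (fun n : ℕ => 1 - 1 / ((n:ℂ) + 1)) atTop (nhds 1) := by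
    have := stmt3_aux1.comp (tendsto_add_atTop_nat 1)
    refine Tendsto.congr (fun n => ?_) this
    simp [Function.comp]
  have hexp : Tendsto (fun n : ℕ =>
      Complex.exp (Complex.I * ((Real.log (n+1) - Real.log n : ℝ) : ℂ))) atTop (nhds 1) := by
    have h1 : Tendsto (fun n : ℕ => ((Real.log (n+1) - Real.log n : ℝ) : ℂ)) atTop (nhds 0) := by
      have h0 := (Complex.continuous_ofReal.tendsto 0).comp stmt3_aux2
      simp only [Complex.ofReal_zero] at h0
      exact h0
    have h2 : Tendsto (fun n : ℕ => Complex.I * ((Real.log (n+1) - Real.log n : ℝ) : ℂ))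
        atTop (nhds 0) := by simpa using tendsto_const_nhds.mul h1
    have := (Complex.continuous_exp.tendsto 0).comp h2
    simpa [Function.comp_def] using this
  have := ((ha.mul stmt3_aux1).mul hexp)
  rw [show ((1:ℂ)*1*1) = 1 by ring] at this
  refine Tendsto.congr (fun n => ?_) this
  exact (stmt3_aux3 n).symm

theorem stmt3_aux5 : ¬ ∃ L : ℂ, Tendsto (fun n : ℕ => (1 - 1 / (n : ℂ)) * Complex.exp (Complex.I * Real.log n))
    atTop (nhds L) := by
  rintro ⟨L, hL⟩
  set Φ : ℕ → ℂ := fun n => (1 - 1 / (n : ℂ)) * Complex.exp (Complex.I * Real.log n) with hΦ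
  -- |L| = 1
  have hnorm : Tendsto (fun n : ℕ => ‖Φ n‖) atTop (nhds 1) := by
    have h1 : Tendsto (fun n : ℕ => ‖(1 - 1 / (n : ℂ))‖) atTop (nhds 1) := by
      have := stmt3_aux1.norm
      simpa using this
    refine Tendsto.congr (fun n => ?_) h1
    rw [hΦ]
    simp only [norm_mul]
    rw [Complex.norm_exp]
    rw [show (Complex.I * ((Real.log n : ℝ) : ℂ)).re = 0 by
      simp only [Complex.mul_re, Complex.I_re, Complex.I_im, Complex.ofReal_re,
        Complex.ofReal_im]; ring]
    rw [Real.exp_zero, mul_one]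
  have hnormL : ‖L‖ = 1 := tendsto_nhds_unique hL.norm hnorm
  -- double subsequence
  have h2n : Tendsto (fun n : ℕ => 2 * n) atTop atTop :=
    tendsto_atTop_atTop.mpr fun b => ⟨b, fun a ha => by omega⟩
  have hΦ2 : Tendsto (fun n : ℕ => Φ (2 * n)) atTop (nhds L) := hL.comp h2n
  have hg : Tendsto (fun n : ℕ => Φ (2*n) - Complex.exp (Complex.I * Real.log 2) * Φ n)
      atTop (nhds (L - Complex.exp (Complex.I * Real.log 2) * L)) :=
    hΦ2.sub (tendsto_const_nhds.mul hL)
  have hg0 : Tendsto (fun n : ℕ => Φ (2*n) - Complex.exp (Complex.I * Real.log 2) * Φ n)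
      atTop (nhds 0) := by
    refine squeeze_zero_norm' (a := fun n : ℕ => 2 / (n:ℝ)) ?_ ?_
    · filter_upwards [eventually_ge_atTop 1] with n hn
      have hn' : (n:ℝ) ≠ 0 := by positivity
      have hlog : Real.log ((2*n : ℕ) : ℝ) = Real.log 2 + Real.log n := by
        push_cast
        rw [Real.log_mul two_ne_zero hn']
      have key : Φ (2*n) - Complex.exp (Complex.I * Real.log 2) * Φ n
          = (1/(n:ℂ) - 1/((2*n : ℕ) : ℂ)) * Complex.exp (Complex.I * Real.log ((2*n:ℕ):ℝ)) := by
        rw [hΦ]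
        simp only
        rw [hlog]
        push_cast
        rw [mul_add, Complex.exp_add]
        ring
      rw [key, norm_mul]
      rw [Complex.norm_exp]
      rw [show ((Complex.I * ((Real.log ((2*n:ℕ):ℝ) : ℝ) : ℂ)).re) = 0 by
        simp only [Complex.mul_re, Complex.I_re, Complex.I_im, Complex.ofReal_re,
          Complex.ofReal_im]; ring]
      rw [Real.exp_zero, mul_one]
      have hb : ‖(1/(n:ℂ) - 1/((2*n : ℕ) : ℂ))‖ ≤ ‖(1/(n:ℂ))‖ + ‖(1/((2*n:ℕ):ℂ))‖ :=
        norm_sub_le _ _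
      have e1 : ‖(1/(n:ℂ))‖ = 1 / (n:ℝ) := by
        rw [norm_div, Complex.norm_natCast]
        simp
      have hn0 : (0:ℝ) < n := by exact_mod_cast Nat.pos_of_ne_zero (by omega)
      have e2 : ‖(1/((2*n:ℕ):ℂ))‖ ≤ 1 / (n:ℝ) := by
        rw [norm_div, norm_one, Complex.norm_natCast]
        exact one_div_le_one_div_of_le hn0 (by push_cast; linarith)
      calc ‖(1/(n:ℂ) - 1/((2*n : ℕ) : ℂ))‖ ≤ 1/(n:ℝ) + 1/(n:ℝ) := by
            rw [← e1]; exact hb.trans (by rw [e1]; linarith [e2])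
        _ = 2 / n := by ring
    · have := tendsto_one_div_atTop_nhds_zero_nat (𝕜 := ℝ)
      have h2 : Tendsto (fun n : ℕ => 2 * ((1:ℝ)/n)) atTop (nhds 0) := by
        simpa using tendsto_const_nhds.mul this
      refine Tendsto.congr (fun n => ?_) h2
      ring
  have heq : L - Complex.exp (Complex.I * Real.log 2) * L = 0 := tendsto_nhds_unique hg hg0
  have hL0 : L = 0 ∨ Complex.exp (Complex.I * Real.log 2) = 1 := by
    rcases mul_eq_zero.mp (show L * (1 - Complex.exp (Complex.I * Real.log 2)) = 0 by
      rw [mul_sub, mul_one, ← heq]; ring) with h | h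
    · exact Or.inl h
    · right; linear_combination -h
  rcases hL0 with h | h
  · rw [h, norm_zero] at hnormL; norm_num at hnormL
  · rw [Complex.exp_eq_one_iff] at h
    obtain ⟨k, hk⟩ := h
    have hre : Real.log 2 = k * (2 * Real.pi) := by
      have hk' : ((Real.log 2 : ℝ) : ℂ) * Complex.I
          = ((((k:ℝ) * (2 * Real.pi)) : ℝ) : ℂ) * Complex.I := by
        rw [show ((Real.log 2 : ℝ) : ℂ) * Complex.I = Complex.I * Real.log 2 by ring, hk]
        push_cast
        ring
      have h4 := mul_right_cancel₀ Complex.I_ne_zero hk'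
      exact_mod_cast h4
    have hpi := Real.pi_gt_three
    have hlog2 : 0 < Real.log 2 := Real.log_pos (by norm_num)
    have hlog2' : Real.log 2 < 1 := by
      have := Real.log_two_lt_d9
      linarith
    rcases lt_trichotomy (k:ℝ) 0 with hk0 | hk0 | hk0
    · nlinarith
    · rw [hk0] at hre; nlinarith
    · have hkz : (0:ℤ) < k := by exact_mod_cast hk0
      have : (1:ℝ) ≤ (k:ℝ) := by exact_mod_cast hkz
      nlinarith

theorem stmt3 :
    (¬ ∃ L : ℂ, Tendsto (fun n : ℕ => (1 - 1 / (n : ℂ)) * Complex.exp (Complex.I * Real.log n))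
        atTop (nhds L)) ∧
    Tendsto (fun n : ℕ =>
        ((1 - 1 / ((n + 1 : ℕ) : ℂ)) * Complex.exp (Complex.I * Real.log (n + 1 : ℕ))) *
          (starRingEnd ℂ) ((1 - 1 / (n : ℂ)) * Complex.exp (Complex.I * Real.log n)))
      atTop (nhds 1) := ⟨stmt3_aux5, stmt3_aux4⟩
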